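/- arXiv:1405.0713 — 3 statements merged into one kernel-verified Lean document; each statement's English description precedes it below -/
import Mathlib

section
/- Let G be a κ-minimal graph with κ ≥ Δ(G) + 1. If v₀ is a 2-vertex of G (a vertex of degree exactly 2), then v₀ is contained in a triangle of G. -/
open SimpleGraph

universe u₁ u₂

/-- The degree of a vertex `x` in a graph `G` (number of neighbors). -/
noncomputable def vdeg {V : Type u₁} (G : SimpleGraph V) (x : V) : ℕ :=
  (G.neighborSet x).ncard

/-- The maximum degree `Δ(G)` of a graph `G`. -/
noncomputable def maxDeg {V : Type u₁} (G : SimpleGraph V) : ℕ :=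
  sSup (Set.range (vdeg G))

/-- A proper edge coloring: distinct edges of `G` sharing an endpoint get distinct colors. -/
def IsProperEdgeColoring {V : Type u₁} (G : SimpleGraph V) (φ : Sym2 V → ℕ) : Prop :=
  ∀ e₁ ∈ G.edgeSet, ∀ e₂ ∈ G.edgeSet, e₁ ≠ e₂ → (∃ x : V, x ∈ e₁ ∧ x ∈ e₂) → φ e₁ ≠ φ e₂

/-- An acyclic edge coloring: a proper edge coloring in which every cycle receives
at least three colors. -/
def IsAcyclicEdgeColoring {V : Type u₁} (G : SimpleGraph V) (φ : Sym2 V → ℕ) : Prop :=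
  IsProperEdgeColoring G φ ∧
    ∀ (x : V) (c : G.Walk x x), c.IsCycle → 3 ≤ (c.edges.map φ).toFinset.card

/-- The acyclic chromatic index `χ'ₐ(G)`: the least number of colors in an acyclic
edge coloring of `G`. -/
noncomputable def acyclicChromaticIndex {V : Type u₁} (G : SimpleGraph V) : ℕ :=
  sInf {n : ℕ | ∃ φ : Sym2 V → ℕ, IsAcyclicEdgeColoring G φ ∧ ∀ e ∈ G.edgeSet, φ e < n}

/-- A graph `G` with maximum degree at most `κ` is `κ`-deletion-minimal if
`χ'ₐ(G) > κ` while `χ'ₐ(H) ≤ κ` for every proper subgraph `H` of `G`. -/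
def DeletionMinimal {V : Type u₁} (G : SimpleGraph V) (κ : ℕ) : Prop :=
  maxDeg G ≤ κ ∧ κ < acyclicChromaticIndex G ∧
    ∀ H : SimpleGraph V, H < G → acyclicChromaticIndex H ≤ κ

/-- `H` is a minor of `G`: there are nonempty, pairwise disjoint, connected branch sets
in `G`, one for each vertex of `H`, with an edge of `G` between the branch sets of any
two adjacent vertices of `H`. -/
def IsMinor {W : Type u₂} {V : Type u₁} (H : SimpleGraph W) (G : SimpleGraph V) : Prop :=
  ∃ B : W → Set V,
    (∀ w, (B w).Nonempty) ∧
    (∀ w, (G.induce (B w)).Connected) ∧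
    (∀ w₁ w₂, w₁ ≠ w₂ → Disjoint (B w₁) (B w₂)) ∧
    ∀ w₁ w₂, H.Adj w₁ w₂ → ∃ v₁ ∈ B w₁, ∃ v₂ ∈ B w₂, G.Adj v₁ v₂

/-- A proper minor of `G`: a minor which is not isomorphic to `G`. -/
def IsProperMinor {W : Type u₂} {V : Type u₁} (H : SimpleGraph W) (G : SimpleGraph V) : Prop :=
  IsMinor H G ∧ ¬ Nonempty (H ≃g G)

/-- A graph `G` with maximum degree at most `κ` is `κ`-minimal if `χ'ₐ(G) > κ` while
`χ'ₐ(H) ≤ κ` for every proper minor `H` of `G` with `Δ(H) ≤ Δ(G)`. -/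
def KMinimal {V : Type u₁} (G : SimpleGraph V) (κ : ℕ) : Prop :=
  maxDeg G ≤ κ ∧ κ < acyclicChromaticIndex G ∧
    ∀ (W : Type u₁) (H : SimpleGraph W),
      IsProperMinor H G → maxDeg H ≤ maxDeg G → acyclicChromaticIndex H ≤ κ

/-- Planarity, characterized combinatorially (Wagner's theorem): a graph is planar iff
it has neither a `K₅` minor nor a `K₃,₃` minor. -/
def IsPlanar {V : Type u₁} (G : SimpleGraph V) : Prop :=
  ¬ IsMinor (completeGraph (Fin 5)) G ∧
    ¬ IsMinor (completeBipartiteGraph (Fin 3) (Fin 3)) G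

/-- `G` is 2-connected: it is connected, has at least three vertices, and removing
any single vertex leaves it connected. -/
def TwoConnected {V : Type u₁} (G : SimpleGraph V) : Prop :=
  G.Connected ∧ 3 ≤ Nat.card V ∧ ∀ x : V, (G.induce {y : V | y ≠ x}).Connected

/-- A path of `H` whose edges are all colored `α` or `β` and alternate. -/
def IsAltPath {V : Type u₁} (H : SimpleGraph V) (φ : Sym2 V → ℕ) (α β : ℕ)
    {x y : V} (p : H.Walk x y) : Prop :=
  p.IsPath ∧ (∀ e ∈ p.edges, φ e = α ∨ φ e = β) ∧
    p.edges.Chain' fun e₁ e₂ => φ e₁ ≠ φ e₂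

/-- A maximal `(α, β)`-dichromatic path: an alternating path that is not properly
contained in any other alternating path. -/
def IsMaxAltPath {V : Type u₁} (H : SimpleGraph V) (φ : Sym2 V → ℕ) (α β : ℕ)
    {x y : V} (p : H.Walk x y) : Prop :=
  IsAltPath H φ α β p ∧
    ∀ {x' y' : V} (q : H.Walk x' y'), IsAltPath H φ α β q →
      (∀ z ∈ p.support, z ∈ q.support) → (∀ e ∈ p.edges, e ∈ q.edges) →
      ∀ e ∈ q.edges, e ∈ p.edges



section Aux
variable {V : Type u₁}

/-- The graph obtained from `G` by contracting `v₀` (of neighbors `u, w`) into `w`: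
delete `v₀` and add the edge `uw`. -/
def auxCtr (G : SimpleGraph V) (u w : V) (v₀ : V) : SimpleGraph {x : V // x ≠ v₀} where
  Adj x y := (x : V) ≠ (y : V) ∧
    (G.Adj x y ∨ ((x : V) = u ∧ (y : V) = w) ∨ ((x : V) = w ∧ (y : V) = u))
  symm := by
    refine ⟨?_⟩
    rintro x y ⟨h1, h2⟩
    refine ⟨h1.symm, ?_⟩
    rcases h2 with h | h | h
    · exact Or.inl h.symm
    · exact Or.inr (Or.inr ⟨h.2, h.1⟩)
    · exact Or.inr (Or.inl ⟨h.2, h.1⟩)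
  loopless := ⟨fun x h => h.1 rfl⟩

lemma auxCtr_comm (G : SimpleGraph V) (u w v₀ : V) : auxCtr G u w v₀ = auxCtr G w u v₀ := by
  ext x y
  simp only [auxCtr]
  tauto

open Classical in
/-- The contraction map `V → V \ {v₀}` sending `v₀` to `w`. -/
noncomputable def auxR (v₀ w : V) (hw : w ≠ v₀) : V → {x : V // x ≠ v₀} :=
  fun x => if h : x = v₀ then ⟨w, hw⟩ else ⟨x, h⟩

lemma auxR_val {v₀ w : V} (hw : w ≠ v₀) {x : V} (hx : x ≠ v₀) :
    auxR v₀ w hw x = ⟨x, hx⟩ := by unfold auxR; rw [dif_neg hx]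

lemma auxR_v₀ {v₀ w : V} (hw : w ≠ v₀) : auxR v₀ w hw v₀ = ⟨w, hw⟩ := by unfold auxR; rw [dif_pos rfl]

lemma auxR_pair {v₀ w : V} (hw : w ≠ v₀) {a b : V} (ha : a ≠ v₀) (hb : b ≠ v₀) :
    Sym2.map (auxR v₀ w hw) s(a, b) = s(⟨a, ha⟩, ⟨b, hb⟩) := by
  rw [Sym2.map_pair_eq, auxR_val hw ha, auxR_val hw hb]

lemma aux_unlift {v₀ w : V} (hw : w ≠ v₀) {e : Sym2 V} (he : v₀ ∉ e) :
    Sym2.map Subtype.val (Sym2.map (auxR v₀ w hw) e) = e := by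
  induction e using Sym2.ind with
  | _ a b =>
    simp only [Sym2.mem_iff, not_or] at he
    rw [auxR_pair hw (fun h => he.1 h.symm) (fun h => he.2 h.symm)]
    simp

lemma aux_map_injOn {v₀ w : V} (hw : w ≠ v₀) {e₁ e₂ : Sym2 V}
    (h1 : v₀ ∉ e₁) (h2 : v₀ ∉ e₂)
    (h : Sym2.map (auxR v₀ w hw) e₁ = Sym2.map (auxR v₀ w hw) e₂) : e₁ = e₂ := by
  have := congrArg (Sym2.map (Subtype.val : {x : V // x ≠ v₀} → V)) h
  rwa [aux_unlift hw h1, aux_unlift hw h2] at this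

lemma aux_lift_edge {G : SimpleGraph V} {u w v₀ : V} (hw : w ≠ v₀) {e : Sym2 V}
    (he : e ∈ G.edgeSet) (hv : v₀ ∉ e) :
    Sym2.map (auxR v₀ w hw) e ∈ (auxCtr G u w v₀).edgeSet := by
  induction e using Sym2.ind with
  | _ a b =>
    simp only [Sym2.mem_iff, not_or] at hv
    have ha : a ≠ v₀ := fun h => hv.1 h.symm
    have hb : b ≠ v₀ := fun h => hv.2 h.symm
    rw [auxR_pair hw ha hb]
    rw [SimpleGraph.mem_edgeSet] at he ⊢
    exact ⟨he.ne, Or.inl he⟩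

/-- Lifting a walk of `G` avoiding `v₀` to the contracted graph. -/
lemma aux_lift_walk {G : SimpleGraph V} {u w v₀ : V} (hw : w ≠ v₀) :
    ∀ {a b : V} (p : G.Walk a b) (hp : ∀ x ∈ p.support, x ≠ v₀),
    ∃ q : (auxCtr G u w v₀).Walk ⟨a, hp a p.start_mem_support⟩ ⟨b, hp b p.end_mem_support⟩,
      q.edges = p.edges.map (Sym2.map (auxR v₀ w hw)) ∧
      q.support = p.support.map (auxR v₀ w hw) := by
  intro a b p
  induction p with
  | nil =>
    intro hp
    refine ⟨Walk.nil, by simp, ?_⟩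
    simp only [Walk.support_nil, List.map_cons, List.map_nil]
    rw [auxR_val hw (hp _ (by simp))]
  | @cons x y z hxy p ih =>
    intro hp
    have hy : ∀ t ∈ p.support, t ≠ v₀ := fun t ht => hp t (by simp [ht])
    obtain ⟨q, hqe, hqs⟩ := ih hy
    have hx : x ≠ v₀ := hp x (by simp)
    have hadj : (auxCtr G u w v₀).Adj ⟨x, hx⟩ ⟨y, hy y p.start_mem_support⟩ :=
      ⟨hxy.ne, Or.inl hxy⟩
    refine ⟨Walk.cons hadj q, ?_, ?_⟩
    · simp only [Walk.edges_cons, hqe, List.map_cons]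
      rw [auxR_pair hw hx (hy y p.start_mem_support)]
    · simp only [Walk.support_cons, hqs, List.map_cons]
      rw [auxR_val hw hx]
end Aux

section Aux2
variable {V : Type u₁}

lemma aux_mem_support_of_mem_edges {G : SimpleGraph V} {a b : V}
    (p : G.Walk a b) (e : Sym2 V) (he : e ∈ p.edges) (t : V) (ht : t ∈ e) : t ∈ p.support := by
  induction e using Sym2.ind with
  | _ x y =>
    rcases Sym2.mem_iff.1 ht with rfl | rfl
    · exact p.fst_mem_support_of_mem_edges he
    · exact p.snd_mem_support_of_mem_edges he

lemma aux_connected_single (G : SimpleGraph V) (a : V) :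
    (G.induce ({a} : Set V)).Connected := by
  rw [connected_iff]
  refine ⟨?_, ⟨⟨a, rfl⟩⟩⟩
  rintro ⟨x, hx⟩ ⟨y, hy⟩
  have hxa : x = a := hx
  have hya : y = a := hy
  subst hxa; subst hya
  exact Walk.nil.reachable

lemma aux_connected_pair {G : SimpleGraph V} {a b : V} (hab : G.Adj a b) :
    (G.induce ({a, b} : Set V)).Connected := by
  rw [connected_iff]
  have key : ∀ z : ({a, b} : Set V),
      (G.induce ({a, b} : Set V)).Reachable ⟨a, Or.inl rfl⟩ z := by
    rintro ⟨z, hz | hz⟩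
    · subst hz; exact Walk.nil.reachable
    · have hzb : z = b := hz
      subst hzb
      exact SimpleGraph.Adj.reachable (by exact hab)
  exact ⟨fun x y => (key x).symm.trans (key y), ⟨⟨a, Or.inl rfl⟩⟩⟩

lemma aux_incident (H : SimpleGraph V) (x : V) :
    {e : Sym2 V | e ∈ H.edgeSet ∧ x ∈ e} ⊆ (fun y => s(x, y)) '' (H.neighborSet x) := by
  rintro e ⟨he, hx⟩
  induction e using Sym2.ind with
  | _ a b =>
    rw [SimpleGraph.mem_edgeSet] at he
    rcases Sym2.mem_iff.1 hx with rfl | rfl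
    · exact ⟨b, he, rfl⟩
    · exact ⟨a, he.symm, Sym2.eq_swap⟩

lemma aux_vdeg_le_maxDeg [Fintype V] (G : SimpleGraph V) (x : V) :
    vdeg G x ≤ maxDeg G := by
  refine le_csSup ⟨Fintype.card V, ?_⟩ ⟨x, rfl⟩
  rintro n ⟨y, rfl⟩
  show (G.neighborSet y).ncard ≤ _
  calc (G.neighborSet y).ncard ≤ (Set.univ : Set V).ncard :=
        Set.ncard_le_ncard (Set.subset_univ _) (Set.toFinite _)
    _ = Fintype.card V := by rw [Set.ncard_univ, Nat.card_eq_fintype_card]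

lemma aux_vdeg_ctr_u [Fintype V] {G : SimpleGraph V} {u w v₀ : V} (hvu : G.Adj v₀ u)
    (hu : u ≠ v₀) (hw : w ≠ v₀) :
    vdeg (auxCtr G u w v₀) ⟨u, hu⟩ ≤ vdeg G u := by
  classical
  refine Set.ncard_le_ncard_of_injOn (fun y => if (y : V) = w then v₀ else (y : V))
    ?_ ?_ (Set.toFinite _)
  · intro y hy
    obtain ⟨hne', hd⟩ := hy
    show (if (y : V) = w then v₀ else (y : V)) ∈ G.neighborSet u
    by_cases hyw : (y : V) = w
    · rw [if_pos hyw]; exact hvu.symm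
    · rw [if_neg hyw]
      rcases hd with hadj | ⟨-, hyww⟩ | ⟨huw, hyu⟩
      · exact hadj
      · exact absurd hyww hyw
      · exact absurd (hyu.trans huw) hyw
  · intro y₁ hy₁ y₂ hy₂ hEq
    dsimp only at hEq
    by_cases h1 : (y₁ : V) = w <;> by_cases h2 : (y₂ : V) = w
    · exact Subtype.ext (h1.trans h2.symm)
    · rw [if_pos h1, if_neg h2] at hEq; exact absurd hEq.symm y₂.2
    · rw [if_neg h1, if_pos h2] at hEq; exact absurd hEq y₁.2
    · rw [if_neg h1, if_neg h2] at hEq; exact Subtype.ext hEq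

lemma aux_vdeg_ctr_other [Fintype V] {G : SimpleGraph V} {u w v₀ : V}
    (x : {x : V // x ≠ v₀}) (hxu : (x : V) ≠ u) (hxw : (x : V) ≠ w) :
    vdeg (auxCtr G u w v₀) x ≤ vdeg G (x : V) := by
  refine Set.ncard_le_ncard_of_injOn (fun y => (y : V)) ?_
    (fun y₁ _ y₂ _ hEq => Subtype.ext hEq) (Set.toFinite _)
  intro y hy
  obtain ⟨hne', hd⟩ := hy
  rcases hd with hadj | ⟨hxu', -⟩ | ⟨hxw', -⟩
  · exact hadj
  · exact absurd hxu' hxu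
  · exact absurd hxw' hxw

lemma aux_exists_coloring {α : Type u₁} [Fintype α] (H : SimpleGraph α) :
    {n : ℕ | ∃ φ : Sym2 α → ℕ, IsAcyclicEdgeColoring H φ ∧
      ∀ e ∈ H.edgeSet, φ e < n}.Nonempty := by
  classical
  haveI : Fintype (Sym2 α) := Fintype.ofFinite _
  set eqv := Fintype.equivFin (Sym2 α) with heqv
  refine ⟨Fintype.card (Sym2 α), fun e => (eqv e : ℕ), ⟨?_, ?_⟩, fun e _ => (eqv e).isLt⟩
  · intro e₁ _ e₂ _ hne _ hEq
    exact hne (eqv.injective (Fin.val_injective hEq))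
  · intro x c hc
    have hnd : (c.edges.map fun e => ((eqv e : ℕ))).Nodup :=
      hc.edges_nodup.map (fun e₁ e₂ hEq => eqv.injective (Fin.val_injective hEq))
    rw [List.toFinset_card_of_nodup hnd, List.length_map, Walk.length_edges]
    exact hc.three_le_length
end Aux2

/-- If `G` is `κ`-minimal with `κ ≥ Δ(G) + 1` and `v₀` has degree 2,
then `v₀` is contained in a triangle. -/
theorem kMinimal_degree_two_in_triangle {V : Type u₁} [Fintype V]
    (G : SimpleGraph V) (κ : ℕ) (h : KMinimal G κ) (hκ : maxDeg G + 1 ≤ κ)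
    (v₀ : V) (hv₀ : vdeg G v₀ = 2) :
    ∃ a b : V, G.Adj v₀ a ∧ G.Adj v₀ b ∧ G.Adj a b := by
  classical
  by_contra hcon
  push_neg at hcon
  have h2 : (G.neighborSet v₀).ncard = 2 := hv₀
  rw [Set.ncard_eq_two] at h2
  obtain ⟨u, w, hne, hN⟩ := h2
  have hvu : G.Adj v₀ u := by
    have : u ∈ G.neighborSet v₀ := by rw [hN]; exact Set.mem_insert _ _
    exact this
  have hvw : G.Adj v₀ w := by
    have : w ∈ G.neighborSet v₀ := by rw [hN]; exact Set.mem_insert_of_mem _ rfl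
    exact this
  have hnadj : ¬ G.Adj u w := fun hadj => hcon u w hvu hvw hadj
  have hu : u ≠ v₀ := fun hEq => G.loopless.irrefl v₀ (hEq ▸ hvu)
  have hw : w ≠ v₀ := fun hEq => G.loopless.irrefl v₀ (hEq ▸ hvw)
  -- characterization of edges at v₀
  have hedgev : ∀ e ∈ G.edgeSet, v₀ ∈ e → e = s(v₀, u) ∨ e = s(v₀, w) := by
    intro e he hv
    induction e using Sym2.ind with
    | _ a b =>
      rw [SimpleGraph.mem_edgeSet] at he
      rcases Sym2.mem_iff.1 hv with rfl | rfl
      · have hb : b ∈ G.neighborSet v₀ := he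
        rw [hN] at hb
        rcases hb with rfl | hb
        · exact Or.inl rfl
        · have : b = w := hb
          subst this; exact Or.inr rfl
      · have ha : a ∈ G.neighborSet v₀ := he.symm
        rw [hN] at ha
        rcases ha with rfl | ha
        · exact Or.inl Sym2.eq_swap
        · have : a = w := ha
          subst this; exact Or.inr Sym2.eq_swap
  -- the contracted graph is a proper minor with no larger max degree
  have hmem_branch : ∀ x : {x : V // x ≠ v₀},
      (x : V) ∈ (if (x : V) = w then ({w, v₀} : Set V) else {(x : V)}) := by
    intro x; split_ifs with hxw
    · rw [hxw]; exact Set.mem_insert _ _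
    · rfl
  have hminor : IsMinor (auxCtr G u w v₀) G := by
    refine ⟨fun x => if (x : V) = w then ({w, v₀} : Set V) else {(x : V)}, ?_, ?_, ?_, ?_⟩
    · intro x; exact ⟨x, hmem_branch x⟩
    · intro x
      dsimp only
      by_cases hxw : (x : V) = w
      · rw [if_pos hxw]; exact aux_connected_pair hvw.symm
      · rw [if_neg hxw]; exact aux_connected_single G (x : V)
    · intro x₁ x₂ hne12
      rw [Set.disjoint_left]
      intro a ha hb
      dsimp only at ha hb
      split_ifs at ha hb with hA hB hB
      · exact hne12 (Subtype.ext (hA.trans hB.symm))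
      · have hax : a = (x₂ : V) := hb
        rcases ha with rfl | rfl
        · exact hB hax.symm
        · exact x₂.2 hax.symm
      · have hax : a = (x₁ : V) := ha
        rcases hb with rfl | rfl
        · exact hA hax.symm
        · exact x₁.2 hax.symm
      · have hax1 : a = (x₁ : V) := ha
        have hax2 : a = (x₂ : V) := hb
        exact hne12 (Subtype.ext (hax1.symm.trans hax2))
    · intro x₁ x₂ hadj
      obtain ⟨hne', hd⟩ := hadj
      rcases hd with hadj' | ⟨hA, hB⟩ | ⟨hA, hB⟩
      · exact ⟨(x₁ : V), hmem_branch x₁, (x₂ : V), hmem_branch x₂, hadj'⟩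
      · refine ⟨(x₁ : V), hmem_branch x₁, v₀, ?_, ?_⟩
        · dsimp only; rw [if_pos hB]; exact Set.mem_insert_of_mem _ rfl
        · rw [hA]; exact hvu.symm
      · refine ⟨v₀, ?_, (x₂ : V), hmem_branch x₂, ?_⟩
        · dsimp only; rw [if_pos hA]; exact Set.mem_insert_of_mem _ rfl
        · rw [hB]; exact hvu
  have hne_iso : ¬ Nonempty ((auxCtr G u w v₀) ≃g G) := by
    rintro ⟨iso⟩
    have hcard := Fintype.card_congr iso.toEquiv
    have hlt : Fintype.card {x : V // x ≠ v₀} < Fintype.card V :=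
      Fintype.card_subtype_lt (x := v₀) (by simp)
    omega
  have hmax : maxDeg (auxCtr G u w v₀) ≤ maxDeg G := by
    have hnonW : Nonempty {x : V // x ≠ v₀} := ⟨⟨u, hu⟩⟩
    refine csSup_le (Set.range_nonempty _) ?_
    rintro n ⟨x, rfl⟩
    by_cases hxu : (x : V) = u
    · have hxeq : x = (⟨u, hu⟩ : {x : V // x ≠ v₀}) := Subtype.ext hxu
      rw [hxeq]
      exact le_trans (aux_vdeg_ctr_u hvu hu hw) (aux_vdeg_le_maxDeg G u)
    · by_cases hxw : (x : V) = w
      · have hxeq : x = (⟨w, hw⟩ : {x : V // x ≠ v₀}) := Subtype.ext hxw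
        rw [hxeq, auxCtr_comm]
        exact le_trans (aux_vdeg_ctr_u hvw hw hu) (aux_vdeg_le_maxDeg G w)
      · exact le_trans (aux_vdeg_ctr_other x hxu hxw) (aux_vdeg_le_maxDeg G (x : V))
  have hle : acyclicChromaticIndex (auxCtr G u w v₀) ≤ κ :=
    h.2.2 _ _ ⟨hminor, hne_iso⟩ hmax
  -- obtain an acyclic coloring of the contracted graph
  obtain ⟨φ, hφ, hφlt⟩ := Nat.sInf_mem (aux_exists_coloring (auxCtr G u w v₀))
  have hφκ : ∀ e ∈ (auxCtr G u w v₀).edgeSet, φ e < κ := fun e he =>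
    lt_of_lt_of_le (hφlt e he) hle
  have hEuw : s((⟨u, hu⟩ : {x : V // x ≠ v₀}), (⟨w, hw⟩ : {x : V // x ≠ v₀})) ∈
      (auxCtr G u w v₀).edgeSet := by
    rw [SimpleGraph.mem_edgeSet]
    exact ⟨hne, Or.inr (Or.inl ⟨rfl, rfl⟩)⟩
  -- choose a fresh color β avoiding all colors at w
  set C : Set ℕ := φ '' {e | e ∈ (auxCtr G u w v₀).edgeSet ∧
      (⟨w, hw⟩ : {x : V // x ≠ v₀}) ∈ e} with hCdef
  have hCcard : C.ncard ≤ vdeg (auxCtr G u w v₀) ⟨w, hw⟩ := by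
    refine le_trans (Set.ncard_le_ncard
      (Set.image_mono (f := φ) (aux_incident (auxCtr G u w v₀) ⟨w, hw⟩)) (Set.toFinite _)) ?_
    exact le_trans (Set.ncard_image_le (Set.toFinite _)) (Set.ncard_image_le (Set.toFinite _))
  have hvdegw : vdeg (auxCtr G u w v₀) ⟨w, hw⟩ ≤ maxDeg G := by
    rw [auxCtr_comm]
    exact le_trans (aux_vdeg_ctr_u hvw hw hu) (aux_vdeg_le_maxDeg G w)
  obtain ⟨β, hβκ, hβC⟩ : ∃ β, β < κ ∧ β ∉ C := by
    by_contra hb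
    push_neg at hb
    have hsub : (↑(Finset.range κ) : Set ℕ) ⊆ C := by
      intro n hn
      exact hb n (by simpa using hn)
    have hκle := Set.ncard_le_ncard hsub (Set.toFinite _)
    rw [Set.ncard_coe_finset, Finset.card_range] at hκle
    omega
  have hαC : φ s((⟨u, hu⟩ : {x : V // x ≠ v₀}), ⟨w, hw⟩) ∈ C :=
    ⟨_, ⟨hEuw, Sym2.mem_iff.2 (Or.inr rfl)⟩, rfl⟩
  have hαβ : φ s((⟨u, hu⟩ : {x : V // x ≠ v₀}), ⟨w, hw⟩) ≠ β :=
    fun hEq => hβC (hEq ▸ hαC)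
  -- the lifted coloring of G
  set ψ : Sym2 V → ℕ :=
    fun e => if v₀ ∈ e ∧ w ∈ e then β else φ (Sym2.map (auxR v₀ w hw) e) with hψdef
  have hψ_notv : ∀ e : Sym2 V, v₀ ∉ e → ψ e = φ (Sym2.map (auxR v₀ w hw) e) := by
    intro e he
    simp only [hψdef]
    exact if_neg (fun hcc => he hcc.1)
  have hψ_vu : ψ s(v₀, u) = φ s((⟨u, hu⟩ : {x : V // x ≠ v₀}), ⟨w, hw⟩) := by
    simp only [hψdef]
    rw [if_neg, Sym2.map_pair_eq, auxR_v₀, auxR_val hw hu]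
    · exact congrArg φ Sym2.eq_swap
    · rintro ⟨-, hwm⟩
      rcases Sym2.mem_iff.1 hwm with hEq | hEq
      · exact hw hEq
      · exact hne hEq.symm
  have hψ_vw : ψ s(v₀, w) = β := by
    simp only [hψdef]
    exact if_pos ⟨Sym2.mem_iff.2 (Or.inl rfl), Sym2.mem_iff.2 (Or.inr rfl)⟩
  have hψκ : ∀ e ∈ G.edgeSet, ψ e < κ := by
    intro e he
    by_cases hv : v₀ ∈ e
    · rcases hedgev e he hv with rfl | rfl
      · rw [hψ_vu]; exact hφκ _ hEuw
      · rw [hψ_vw]; exact hβκ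
    · rw [hψ_notv e hv]
      exact hφκ _ (aux_lift_edge hw he hv)
  have hC_mem : ∀ e ∈ G.edgeSet, v₀ ∉ e → w ∈ e → ψ e ∈ C := by
    intro e he hv hwm
    rw [hψ_notv e hv]
    exact ⟨Sym2.map (auxR v₀ w hw) e,
      ⟨aux_lift_edge hw he hv, Sym2.mem_map.2 ⟨w, hwm, auxR_val hw hw⟩⟩, rfl⟩
  -- properness of ψ
  have hkey : ∀ ea ∈ G.edgeSet, ∀ eb ∈ G.edgeSet, v₀ ∈ ea → v₀ ∉ eb →
      (∃ x, x ∈ ea ∧ x ∈ eb) → ψ ea ≠ ψ eb := by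
    rintro ea hea eb heb hva hvb ⟨x, hxa, hxb⟩
    have hxne : x ≠ v₀ := fun hEq => hvb (hEq ▸ hxb)
    rcases hedgev ea hea hva with rfl | rfl
    · -- ea = s(v₀, u)
      rw [hψ_vu, hψ_notv eb hvb]
      have hxu : x = u := by
        rcases Sym2.mem_iff.1 hxa with hEq | hEq
        · exact absurd hEq hxne
        · exact hEq
      have hub : u ∈ eb := hxu ▸ hxb
      have hu'mem : (⟨u, hu⟩ : {x : V // x ≠ v₀}) ∈ Sym2.map (auxR v₀ w hw) eb :=
        Sym2.mem_map.2 ⟨u, hub, auxR_val hw hu⟩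
      have hne2 : Sym2.map (auxR v₀ w hw) eb ≠
          s((⟨u, hu⟩ : {x : V // x ≠ v₀}), ⟨w, hw⟩) := by
        intro hEq
        have h5 := congrArg (Sym2.map (Subtype.val : {x : V // x ≠ v₀} → V)) hEq
        rw [aux_unlift hw hvb] at h5
        simp only [Sym2.map_pair_eq] at h5
        rw [h5] at heb
        exact hnadj (G.mem_edgeSet.1 heb)
      exact hφ.1 _ hEuw _ (aux_lift_edge hw heb hvb) (Ne.symm hne2)
        ⟨⟨u, hu⟩, Sym2.mem_iff.2 (Or.inl rfl), hu'mem⟩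
    · -- ea = s(v₀, w)
      rw [hψ_vw]
      have hxw : x = w := by
        rcases Sym2.mem_iff.1 hxa with hEq | hEq
        · exact absurd hEq hxne
        · exact hEq
      have hwb : w ∈ eb := hxw ▸ hxb
      exact fun hEq => hβC (hEq ▸ hC_mem eb heb hvb hwb)
  have hproperψ : IsProperEdgeColoring G ψ := by
    intro e₁ he₁ e₂ he₂ hne12 hsh
    by_cases hv1 : v₀ ∈ e₁ <;> by_cases hv2 : v₀ ∈ e₂
    · rcases hedgev e₁ he₁ hv1 with rfl | rfl <;> rcases hedgev e₂ he₂ hv2 with rfl | rfl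
      · exact absurd rfl hne12
      · rw [hψ_vu, hψ_vw]; exact hαβ
      · rw [hψ_vw, hψ_vu]; exact Ne.symm hαβ
      · exact absurd rfl hne12
    · exact hkey e₁ he₁ e₂ he₂ hv1 hv2 hsh
    · obtain ⟨x, hx1, hx2⟩ := hsh
      exact Ne.symm (hkey e₂ he₂ e₁ he₁ hv2 hv1 ⟨x, hx2, hx1⟩)
    · rw [hψ_notv e₁ hv1, hψ_notv e₂ hv2]
      obtain ⟨x, hx1, hx2⟩ := hsh
      refine hφ.1 _ (aux_lift_edge hw he₁ hv1) _ (aux_lift_edge hw he₂ hv2)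
        (fun hEq => hne12 (aux_map_injOn hw hv1 hv2 hEq))
        ⟨auxR v₀ w hw x, Sym2.mem_map.2 ⟨x, hx1, rfl⟩, Sym2.mem_map.2 ⟨x, hx2, rfl⟩⟩
  -- acyclicity of ψ
  have hacyc : ∀ (x : V) (c : G.Walk x x), c.IsCycle →
      3 ≤ ((c.edges.map ψ).toFinset.card) := by
    intro x c hc
    by_cases hv : v₀ ∈ c.support
    · -- the cycle passes through v₀
      have hrot : ((c.rotate v₀ hv).edges.map ψ).toFinset = (c.edges.map ψ).toFinset := by
        refine List.toFinset.ext_iff.2 ?_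
        intro n
        constructor <;> intro hn <;>
          rcases List.mem_map.1 hn with ⟨e, he, rfl⟩
        · exact List.mem_map_of_mem (f := ψ) (((Walk.rotate_edges c v₀ hv).perm).mem_iff.1 he)
        · exact List.mem_map_of_mem (f := ψ) (((Walk.rotate_edges c v₀ hv).perm).mem_iff.2 he)
      rw [← hrot]
      have hc' : (c.rotate v₀ hv).IsCycle := hc.rotate hv
      have hnn : ¬ (c.rotate v₀ hv).Nil := by
        rw [Walk.nil_iff_length_eq]
        have := hc'.three_le_length
        omega
      obtain ⟨y, h₁, p, hcons⟩ := Walk.not_nil_iff.1 hnn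
      rw [hcons] at hc' ⊢
      have hv0y : v₀ ≠ y := G.ne_of_adj h₁
      obtain ⟨z, h₂, P', hP'⟩ := Walk.exists_eq_cons_of_ne hv0y p.reverse
      have hp : p = P'.reverse.append (Walk.cons h₂.symm Walk.nil) := by
        have h3 := congrArg Walk.reverse hP'
        rw [Walk.reverse_reverse, Walk.reverse_cons] at h3
        exact h3
      obtain ⟨hppath, hnotmem⟩ := (Walk.cons_isCycle_iff p h₁).1 hc'
      have hpsup : p.support = P'.reverse.support ++ [v₀] := by
        rw [hp, Walk.support_append]; rfl
      have hpedges : p.edges = P'.reverse.edges ++ [s(z, v₀)] := by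
        rw [hp, Walk.edges_append]; rfl
      have hPnd : P'.reverse.support.Nodup ∧ v₀ ∉ P'.reverse.support := by
        have hnd := (Walk.isPath_def _).1 hppath
        rw [hpsup, List.nodup_append] at hnd
        exact ⟨hnd.1, fun hm => hnd.2.2 _ hm _ (List.mem_singleton_self _) rfl⟩
      have hyz : y ≠ z := by
        intro hEq
        apply hnotmem
        rw [hpedges]
        refine List.mem_append_right _ (List.mem_singleton.2 ?_)
        rw [hEq]; exact Sym2.eq_swap
      -- common final argument
      have main : ∀ (Q : G.Walk u w), Q.IsPath → (∀ t ∈ Q.support, t ≠ v₀) →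
          (∀ e ∈ Q.edges, e ∈ (Walk.cons h₁ p).edges) →
          s(v₀, u) ∈ (Walk.cons h₁ p).edges →
          3 ≤ (((Walk.cons h₁ p).edges.map ψ).toFinset.card) := by
        intro Q hQp hQv hQsub hvumem
        obtain ⟨q0, hq0e, hq0s⟩ := aux_lift_walk (u := u) (G := G) hw Q hQv
        have hq0path : q0.IsPath := by
          rw [Walk.isPath_def, hq0s]
          refine List.Nodup.map_on ?_ ((Walk.isPath_def _).1 hQp)
          intro t₁ ht₁ t₂ ht₂ hEq
          rw [auxR_val hw (hQv t₁ ht₁), auxR_val hw (hQv t₂ ht₂)] at hEq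
          exact Subtype.ext_iff.1 hEq
        have hadjwu : (auxCtr G u w v₀).Adj ⟨w, hw⟩ ⟨u, hu⟩ :=
          ⟨Ne.symm hne, Or.inr (Or.inr ⟨rfl, rfl⟩)⟩
        have hqcyc : (Walk.cons hadjwu q0).IsCycle := by
          rw [Walk.cons_isCycle_iff]
          refine ⟨hq0path, ?_⟩
          intro hmem
          rw [hq0e] at hmem
          rcases List.mem_map.1 hmem with ⟨e, heQ, hEq⟩
          have hvne : v₀ ∉ e := fun hvmem =>
            (hQv v₀ (aux_mem_support_of_mem_edges Q e heQ v₀ hvmem)) rfl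
          have heuw : e = s(w, u) := by
            have h5 := congrArg (Sym2.map (Subtype.val : {x : V // x ≠ v₀} → V)) hEq
            rw [aux_unlift hw hvne] at h5
            simpa using h5
          rw [heuw] at heQ
          exact hnadj (G.mem_edgeSet.1 (Walk.edges_subset_edgeSet Q heQ)).symm
        have h3 := hφ.2 _ _ hqcyc
        refine le_trans h3 (Finset.card_le_card ?_)
        intro n hn
        rw [List.mem_toFinset] at hn ⊢
        rw [Walk.edges_cons, List.map_cons] at hn
        rcases List.mem_cons.1 hn with rfl | hn
        · have hcol : φ s((⟨w, hw⟩ : {x : V // x ≠ v₀}), ⟨u, hu⟩) = ψ s(v₀, u) := by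
            rw [hψ_vu]; exact congrArg φ Sym2.eq_swap
          rw [hcol]
          exact List.mem_map_of_mem (f := ψ) hvumem
        · rw [hq0e, List.map_map] at hn
          rcases List.mem_map.1 hn with ⟨e, heQ, rfl⟩
          have hvne : v₀ ∉ e := fun hvmem =>
            (hQv v₀ (aux_mem_support_of_mem_edges Q e heQ v₀ hvmem)) rfl
          have hEq : (φ ∘ Sym2.map (auxR v₀ w hw)) e = ψ e := (hψ_notv e hvne).symm
          rw [hEq]
          exact List.mem_map_of_mem (f := ψ) (hQsub e heQ)
      have hyNs : y = u ∨ y = w := by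
        have hyn : y ∈ G.neighborSet v₀ := h₁
        rw [hN] at hyn
        exact hyn
      have hzNs : z = u ∨ z = w := by
        have hzn : z ∈ G.neighborSet v₀ := h₂
        rw [hN] at hzn
        exact hzn
      rcases hyNs with rfl | rfl
      · rcases hzNs with rfl | rfl
        · exact absurd rfl hyz
        · -- y = u, z = w : take Q = P'.reverse
          refine main P'.reverse ((Walk.isPath_def _).2 hPnd.1)
            (fun t ht hEq => hPnd.2 (hEq ▸ ht)) ?_ ?_
          · intro e heP
            rw [Walk.edges_cons, hpedges]
            exact List.mem_cons_of_mem _ (List.mem_append_left _ heP)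
          · rw [Walk.edges_cons]
            exact List.mem_cons_self
      · rcases hzNs with rfl | rfl
        · -- y = w, z = u : take Q = P'
          have hP'nd : P'.support.Nodup := by
            have := hPnd.1
            rwa [Walk.support_reverse, List.nodup_reverse] at this
          have hP'v : v₀ ∉ P'.support := by
            intro hm
            exact hPnd.2 (by rwa [Walk.support_reverse, List.mem_reverse])
          refine main P' ((Walk.isPath_def _).2 hP'nd)
            (fun t ht hEq => hP'v (hEq ▸ ht)) ?_ ?_
          · intro e heP
            rw [Walk.edges_cons, hpedges]
            refine List.mem_cons_of_mem _ (List.mem_append_left _ ?_)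
            rwa [Walk.edges_reverse, List.mem_reverse]
          · rw [Walk.edges_cons, hpedges]
            refine List.mem_cons_of_mem _ (List.mem_append_right _
              (List.mem_singleton.2 Sym2.eq_swap))
        · exact absurd rfl hyz
    · -- the cycle avoids v₀ : lift it to the contracted graph
      have hsup : ∀ t ∈ c.support, t ≠ v₀ := fun t ht hEq => hv (hEq ▸ ht)
      obtain ⟨q, hqe, hqs⟩ := aux_lift_walk (u := u) (G := G) hw c hsup
      have hveg : ∀ e ∈ c.edges, v₀ ∉ e := fun e he hm =>
        (hsup v₀ (aux_mem_support_of_mem_edges c e he v₀ hm)) rfl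
      have hqtrail : q.edges.Nodup := by
        rw [hqe]
        exact List.Nodup.map_on
          (fun e₁ h₁ e₂ h₂ hEq => aux_map_injOn hw (hveg e₁ h₁) (hveg e₂ h₂) hEq)
          hc.edges_nodup
      have hqne : q ≠ Walk.nil := by
        intro hEq
        have hqnil : q.edges = [] := by rw [hEq]; rfl
        rw [hqe] at hqnil
        have hce : c.edges = [] := List.map_eq_nil_iff.1 hqnil
        have h3 := hc.three_le_length
        rw [← Walk.length_edges, hce] at h3
        simp at h3
      have hqsupnd : q.support.tail.Nodup := by
        rw [hqs]
        have htail : (c.support.map (auxR v₀ w hw)).tail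
            = c.support.tail.map (auxR v₀ w hw) := by
          cases c.support <;> rfl
        rw [htail]
        refine List.Nodup.map_on ?_ hc.support_nodup
        intro t₁ ht₁ t₂ ht₂ hEq
        rw [auxR_val hw (hsup t₁ (List.mem_of_mem_tail ht₁)),
          auxR_val hw (hsup t₂ (List.mem_of_mem_tail ht₂))] at hEq
        exact Subtype.ext_iff.1 hEq
      have hqcyc : q.IsCycle := ⟨⟨⟨hqtrail⟩, hqne⟩, hqsupnd⟩
      have h3 := hφ.2 _ q hqcyc
      have hEqc : q.edges.map φ = c.edges.map ψ := by
        rw [hqe, List.map_map]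
        exact (List.map_congr_left (fun e he => hψ_notv e (hveg e he))).symm
      rwa [hEqc] at h3
  have hfin : acyclicChromaticIndex G ≤ κ := Nat.sInf_le ⟨ψ, ⟨hproperψ, hacyc⟩, hψκ⟩
  exact absurd hfin (not_le.2 h.2.1)
end

section
/- Let G be a κ-deletion-minimal graph, and let v be adjacent to a vertex v₀ of degree 2 with N_G(v₀) = {w, v}. If κ ≥ deg_G(v) + 1 and wv is an edge of G, then v is adjacent to at least κ − deg_G(w) + 2 vertices of degree at least κ − deg_G(v) + 2, and deg_G(v) ≥ κ − deg_G(w) + 3. -/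
open SimpleGraph

universe u₁ u₂

section AuxiliaryLemmas

lemma walk_loop_decomp {V : Type u₁} {G : SimpleGraph V} {u : V} {p : G.Walk u u}
    (hnn : p ≠ Walk.nil) : ∃ l : List V, p.support = u :: (l ++ [u]) := by
  obtain ⟨y, hadj, q, rfl⟩ := Walk.not_nil_iff.mp (fun hn => hnn hn.eq_nil)
  refine ⟨q.support.dropLast, ?_⟩
  rw [Walk.support_cons]
  congr 1
  conv_lhs => rw [← List.dropLast_append_getLast (q.support_ne_nil)]
  congr 1
  rw [q.getLast_support]

lemma cycle_reverse {V : Type u₁} {G : SimpleGraph V} {u : V} {p : G.Walk u u}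
    (h : p.IsCycle) : p.reverse.IsCycle := by
  have hnn : p ≠ Walk.nil := h.ne_nil
  refine ⟨⟨⟨?_⟩, ?_⟩, ?_⟩
  · rw [Walk.edges_reverse, List.nodup_reverse]
    exact h.edges_nodup
  · intro hrn
    exact hnn (by simpa using congrArg Walk.reverse hrn)
  · obtain ⟨l, hl⟩ := walk_loop_decomp hnn
    have hnd : (l ++ [u]).Nodup := by
      have := h.support_nodup
      rwa [hl] at this
    rw [Walk.support_reverse, hl]
    simp only [List.reverse_cons, List.reverse_append, List.reverse_cons, List.reverse_nil,
      List.nil_append, List.singleton_append, List.cons_append, List.tail_cons]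
    simp only [List.nodup_append, List.nodup_reverse] at hnd ⊢
    simp only [List.disjoint_singleton, List.mem_reverse] at hnd ⊢
    tauto

lemma acyclic_of_injective {V : Type u₁} {G : SimpleGraph V} {φ : Sym2 V → ℕ}
    (hinj : Function.Injective φ) : IsAcyclicEdgeColoring G φ := by
  constructor
  · intro e₁ _ e₂ _ hne _
    exact fun hc => hne (hinj hc)
  · intro x c hc
    have hnd : (c.edges.map φ).Nodup := hc.edges_nodup.map hinj
    rw [List.toFinset_card_of_nodup hnd ]
    rw [List.length_map, Walk.length_edges]
    exact hc.three_le_length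

lemma coloring_set_nonempty {V : Type u₁} [Fintype V] (G : SimpleGraph V) :
    {n : ℕ | ∃ φ : Sym2 V → ℕ, IsAcyclicEdgeColoring G φ ∧ ∀ e ∈ G.edgeSet, φ e < n}.Nonempty := by
  classical
  refine ⟨Fintype.card (Sym2 V), fun e => (Fintype.equivFin (Sym2 V) e : ℕ), ?_, ?_⟩
  · exact acyclic_of_injective (fun a b hab => (Fintype.equivFin (Sym2 V)).injective (Fin.val_injective hab))
  · intro e _
    exact (Fintype.equivFin (Sym2 V) e).isLt

lemma get_coloring {V : Type u₁} [Fintype V] {H : SimpleGraph V} {κ : ℕ}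
    (hle : acyclicChromaticIndex H ≤ κ) :
    ∃ φ : Sym2 V → ℕ, IsAcyclicEdgeColoring H φ ∧ ∀ e ∈ H.edgeSet, φ e < κ := by
  have hmem := Nat.sInf_mem (coloring_set_nonempty H)
  obtain ⟨φ, h1, h2⟩ := hmem
  exact ⟨φ, h1, fun e he => lt_of_lt_of_le (h2 e he) hle⟩

/-- Graph with all edges at `v₀` removed. -/
def delV {V : Type u₁} (G : SimpleGraph V) (v₀ : V) : SimpleGraph V where
  Adj x y := G.Adj x y ∧ x ≠ v₀ ∧ y ≠ v₀
  symm := ⟨fun x y ⟨h, hx, hy⟩ => ⟨h.symm, hy, hx⟩⟩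
  loopless := ⟨fun x ⟨h, _, _⟩ => G.loopless.irrefl x h⟩

lemma delV_le {V : Type u₁} (G : SimpleGraph V) (v₀ : V) : delV G v₀ ≤ G :=
  fun _ _ h => h.1

lemma delV_adj {V : Type u₁} {G : SimpleGraph V} {v₀ x y : V} :
    (delV G v₀).Adj x y ↔ G.Adj x y ∧ x ≠ v₀ ∧ y ≠ v₀ := Iff.rfl

lemma not_mem_of_delV_edge {V : Type u₁} {G : SimpleGraph V} {v₀ : V} {e : Sym2 V}
    (he : e ∈ (delV G v₀).edgeSet) : v₀ ∉ e := by
  induction e with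
  | _ x y =>
    rw [mem_edgeSet] at he
    intro hm
    rcases Sym2.mem_iff.mp hm with h | h
    · exact he.2.1 h.symm
    · exact he.2.2 h.symm

/-- The set of colors on edges at `x`. -/
def colorsAt {V : Type u₁} (H : SimpleGraph V) (φ : Sym2 V → ℕ) (x : V) : Set ℕ :=
  (fun y => φ s(x, y)) '' H.neighborSet x

lemma mem_colorsAt {V : Type u₁} {H : SimpleGraph V} {φ : Sym2 V → ℕ} {x : V} {e : Sym2 V}
    (he : e ∈ H.edgeSet) (hx : x ∈ e) : φ e ∈ colorsAt H φ x := by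
  induction e with
  | _ p q =>
    rw [mem_edgeSet] at he
    rcases Sym2.mem_iff.mp hx with h | h
    · subst h
      exact ⟨q, he, rfl⟩
    · subst h
      exact ⟨p, he.symm, by rw [Sym2.eq_swap]⟩

/-- Edges of `G` containing `v₀` when `N(v₀) = {w, v}`. -/
lemma edge_at_v0 {V : Type u₁} {G : SimpleGraph V} {v v₀ w : V}
    (hN : G.neighborSet v₀ = {w, v}) {e : Sym2 V} (he : e ∈ G.edgeSet) (hm : v₀ ∈ e) :
    e = s(v₀, v) ∨ e = s(v₀, w) := by
  induction e with
  | _ x y =>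
    rw [mem_edgeSet] at he
    rcases Sym2.mem_iff.mp hm with h | h
    · subst h
      have : y ∈ G.neighborSet v₀ := he
      rw [hN] at this
      rcases this with h | h
      · right; rw [h]
      · left; rw [h]
    · subst h
      have : x ∈ G.neighborSet v₀ := he.symm
      rw [hN] at this
      rcases this with h | h
      · right; rw [h, Sym2.eq_swap]
      · left; rw [h, Sym2.eq_swap]

lemma mem_delV_edgeSet {V : Type u₁} {G : SimpleGraph V} {v₀ : V} {e : Sym2 V}
    (he : e ∈ G.edgeSet) (hv : v₀ ∉ e) : e ∈ (delV G v₀).edgeSet := by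
  induction e with
  | _ x y =>
    rw [mem_edgeSet] at he ⊢
    exact ⟨he, fun h => hv (by rw [h]; simp), fun h => hv (by rw [h]; simp)⟩


lemma cycle_analysis {V : Type u₁} {G : SimpleGraph V} {v v₀ w : V} {φ ψ : Sym2 V → ℕ}
    {a b : ℕ}
    (hN : G.neighborSet v₀ = {w, v})
    (hprop : IsProperEdgeColoring (delV G v₀) φ)
    (hψφ : ∀ e ∈ (delV G v₀).edgeSet, ψ e = φ e)
    (haw : a ∉ colorsAt (delV G v₀) φ w) (hbv : b ∉ colorsAt (delV G v₀) φ v)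
    (h₀ : G.Adj v₀ v)
    (q : G.Walk v v₀) (hW : (Walk.cons h₀ q).IsCycle)
    (hcol : ∀ e ∈ (Walk.cons h₀ q).edges, ψ e = a ∨ ψ e = b) :
    ∃ t s : V, (delV G v₀).Adj v t ∧ φ s(v, t) = a ∧
      (delV G v₀).Adj t s ∧ s ≠ v ∧ φ s(t, s) = b := by
  have hvv₀ : v ≠ v₀ := fun h => G.loopless.irrefl v₀ (h ▸ h₀)
  -- q is not nil
  have hqnn : ¬ q.Nil := Walk.not_nil_of_ne hvv₀
  obtain ⟨t, h₂, q₂, rfl⟩ := Walk.not_nil_iff.mp hqnn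
  -- support nodup facts
  have hsup : (Walk.cons h₀ (Walk.cons h₂ q₂)).support.tail.Nodup := hW.support_nodup
  rw [Walk.support_cons, List.tail_cons, Walk.support_cons] at hsup
  have hvq : v ∉ q₂.support := (List.nodup_cons.mp hsup).1
  have hq₂nd : q₂.support.Nodup := (List.nodup_cons.mp hsup).2
  have htv₀ : t ≠ v₀ := by
    intro h
    subst h
    have : q₂ = Walk.nil := (Walk.isPath_iff_eq_nil (p := q₂)).mp (Walk.isPath_def q₂ |>.mpr hq₂nd)
    subst this
    have := hW.three_le_length
    simp [Walk.length_cons] at this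
  have htv : t ≠ v := fun h => G.loopless.irrefl v (h ▸ h₂)
  -- second edge
  have he₂H : s(v, t) ∈ (delV G v₀).edgeSet := by
    rw [mem_edgeSet]
    exact ⟨h₂, hvv₀, htv₀⟩
  have he₂mem : s(v, t) ∈ (Walk.cons h₀ (Walk.cons h₂ q₂)).edges := by
    rw [Walk.edges_cons, Walk.edges_cons]
    simp
  have hψe₂ : ψ s(v, t) = φ s(v, t) := hψφ _ he₂H
  have hφe₂ : φ s(v, t) = a := by
    rcases hcol _ he₂mem with h | h
    · rw [hψe₂] at h; exact h
    · rw [hψe₂] at h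
      exact absurd (h ▸ mem_colorsAt he₂H (by simp)) hbv
  -- third edge
  have hq₂nn : ¬ q₂.Nil := Walk.not_nil_of_ne htv₀
  obtain ⟨s', h₃, q₃, rfl⟩ := Walk.not_nil_iff.mp hq₂nn
  have hs'v : s' ≠ v := by
    intro h
    subst h
    exact hvq (by rw [Walk.support_cons]; simp)
  have hs'v₀ : s' ≠ v₀ := by
    intro h
    have he₃G : s(t, s') ∈ G.edgeSet := h₃
    rcases edge_at_v0 hN he₃G (by rw [h]; simp) with hh | hh
    · rw [h, Sym2.eq_swap] at hh
      exact htv (Sym2.congr_right.mp hh)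
    · rw [h, Sym2.eq_swap] at hh
      have ht : t = w := Sym2.congr_right.mp hh
      exact haw (hφe₂ ▸ mem_colorsAt he₂H (by rw [ht]; simp))
  have he₃H : s(t, s') ∈ (delV G v₀).edgeSet := by
    rw [mem_edgeSet]
    exact ⟨h₃, htv₀, hs'v₀⟩
  have he₃mem : s(t, s') ∈ (Walk.cons h₀ (Walk.cons h₂ (Walk.cons h₃ q₃))).edges := by
    simp [Walk.edges_cons]
  have hne : s(v, t) ≠ s(t, s') := by
    intro h
    rw [Sym2.eq_iff] at h
    rcases h with ⟨h1, h2⟩ | ⟨h1, h2⟩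
    · exact htv h1.symm
    · exact hs'v h1.symm
  have hψe₃ : ψ s(t, s') = φ s(t, s') := hψφ _ he₃H
  have hφe₃ : φ s(t, s') = b := by
    rcases hcol _ he₃mem with h | h
    · rw [hψe₃] at h
      exact absurd (hφe₂ ▸ h) (by
        intro hh
        exact hprop _ he₂H _ he₃H hne ⟨t, by simp, by simp⟩ (by rw [hφe₂, h]))
    · rw [hψe₃] at h; exact h
  exact ⟨t, s', he₂H, hφe₂, he₃H, hs'v, hφe₃⟩

lemma ext_lemma {V : Type u₁} {G : SimpleGraph V} {κ : ℕ}
    (hGκ : κ < acyclicChromaticIndex G)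
    {v v₀ w : V} (hadj : G.Adj v v₀) (hN : G.neighborSet v₀ = {w, v}) (hwv : w ≠ v)
    {φ : Sym2 V → ℕ} (hφ : IsAcyclicEdgeColoring (delV G v₀) φ)
    (hφκ : ∀ e ∈ (delV G v₀).edgeSet, φ e < κ)
    {a b : ℕ} (ha : a < κ) (hb : b < κ) (hab : a ≠ b)
    (haw : a ∉ colorsAt (delV G v₀) φ w) (hbv : b ∉ colorsAt (delV G v₀) φ v) :
    ∃ t s : V, (delV G v₀).Adj v t ∧ φ s(v, t) = a ∧
      (delV G v₀).Adj t s ∧ s ≠ v ∧ φ s(t, s) = b := by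
  classical
  set ψ : Sym2 V → ℕ := fun e => if e = s(v₀, v) then b else if e = s(v₀, w) then a else φ e
    with hψdef
  have hGadj₀v : G.Adj v₀ v := hadj.symm
  have hGadj₀w : G.Adj v₀ w := by
    have : w ∈ G.neighborSet v₀ := by rw [hN]; left; rfl
    exact this
  have hnewne : s(v₀, v) ≠ s(v₀, w) := fun h => hwv (Sym2.congr_right.mp h).symm
  have hψv : ψ s(v₀, v) = b := if_pos rfl
  have hψw : ψ s(v₀, w) = a := by
    rw [hψdef]
    simp only []
    rw [if_neg hnewne.symm]
    simp
  have hold : ∀ e ∈ G.edgeSet, e ≠ s(v₀, v) → e ≠ s(v₀, w) →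
      e ∈ (delV G v₀).edgeSet ∧ ψ e = φ e := by
    intro e he h1 h2
    have hv₀e : v₀ ∉ e := by
      intro hm
      rcases edge_at_v0 hN he hm with h | h
      · exact h1 h
      · exact h2 h
    exact ⟨mem_delV_edgeSet he hv₀e, by rw [hψdef]; simp only []; rw [if_neg h1, if_neg h2]⟩
  have hHold : ∀ e ∈ (delV G v₀).edgeSet, ψ e = φ e := by
    intro e he
    have hv₀e := not_mem_of_delV_edge he
    have h1 : e ≠ s(v₀, v) := fun h => hv₀e (by rw [h]; simp)
    have h2 : e ≠ s(v₀, w) := fun h => hv₀e (by rw [h]; simp)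
    rw [hψdef]; simp only []; rw [if_neg h1, if_neg h2]
  -- properness helpers
  have A1 : ∀ e ∈ G.edgeSet, e ≠ s(v₀, v) → (∃ x, x ∈ e ∧ x ∈ s(v₀, v)) → ψ e ≠ b := by
    rintro e he hne ⟨x, hx, hx'⟩
    by_cases hw : e = s(v₀, w)
    · rw [hw, hψw]; exact hab
    · obtain ⟨heH, hψe⟩ := hold e he hne hw
      rcases Sym2.mem_iff.mp hx' with h | h
      · exact absurd (h ▸ hx) (not_mem_of_delV_edge heH)
      · rw [hψe]
        intro hbe
        exact hbv (hbe ▸ mem_colorsAt heH (h ▸ hx))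
  have A2 : ∀ e ∈ G.edgeSet, e ≠ s(v₀, w) → (∃ x, x ∈ e ∧ x ∈ s(v₀, w)) → ψ e ≠ a := by
    rintro e he hne ⟨x, hx, hx'⟩
    by_cases hv' : e = s(v₀, v)
    · rw [hv', hψv]; exact fun h => hab h.symm
    · obtain ⟨heH, hψe⟩ := hold e he hv' hne
      rcases Sym2.mem_iff.mp hx' with h | h
      · exact absurd (h ▸ hx) (not_mem_of_delV_edge heH)
      · rw [hψe]
        intro hae
        exact haw (hae ▸ mem_colorsAt heH (h ▸ hx))
  have hψprop : IsProperEdgeColoring G ψ := by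
    rintro e₁ he₁ e₂ he₂ hne ⟨x, hx1, hx2⟩
    by_cases h1 : e₁ = s(v₀, v)
    · rw [h1, hψv]
      exact fun h => A1 e₂ he₂ (fun hh => hne (h1 ▸ hh ▸ rfl)) ⟨x, hx2, h1 ▸ hx1⟩ h.symm
    · by_cases h2 : e₂ = s(v₀, v)
      · rw [h2, hψv]
        exact A1 e₁ he₁ (fun hh => hne (by rw [hh, h2])) ⟨x, hx1, h2 ▸ hx2⟩
      · by_cases h3 : e₁ = s(v₀, w)
        · rw [h3, hψw]
          exact fun h => A2 e₂ he₂ (fun hh => hne (by rw [h3, hh])) ⟨x, hx2, h3 ▸ hx1⟩ h.symm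
        · by_cases h4 : e₂ = s(v₀, w)
          · rw [h4, hψw]
            exact A2 e₁ he₁ (fun hh => hne (by rw [hh, h4])) ⟨x, hx1, h4 ▸ hx2⟩
          · obtain ⟨he₁H, hψ₁⟩ := hold e₁ he₁ h1 h3
            obtain ⟨he₂H, hψ₂⟩ := hold e₂ he₂ h2 h4
            rw [hψ₁, hψ₂]
            exact hφ.1 e₁ he₁H e₂ he₂H hne ⟨x, hx1, hx2⟩
  have hψκ : ∀ e ∈ G.edgeSet, ψ e < κ := by
    intro e he
    by_cases h1 : e = s(v₀, v)
    · rw [h1, hψv]; exact hb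
    · by_cases h2 : e = s(v₀, w)
      · rw [h2, hψw]; exact ha
      · obtain ⟨heH, hψe⟩ := hold e he h1 h2
        rw [hψe]; exact hφκ e heH
  -- ψ cannot be acyclic
  have hnotac : ¬ (∀ (x : V) (c : G.Walk x x), c.IsCycle → 3 ≤ (c.edges.map ψ).toFinset.card) := by
    intro hac
    have hmem : κ ∈ {n : ℕ | ∃ φ' : Sym2 V → ℕ, IsAcyclicEdgeColoring G φ' ∧
        ∀ e ∈ G.edgeSet, φ' e < n} := ⟨ψ, ⟨hψprop, hac⟩, hψκ⟩
    exact absurd (Nat.sInf_le hmem) (not_le.mpr hGκ)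
  push_neg at hnotac
  obtain ⟨x, c, hc, hcard⟩ := hnotac
  by_cases hv₀sup : v₀ ∈ c.support
  case neg =>
    -- the cycle avoids v₀, lives in delV, contradiction with φ acyclic
    exfalso
    have hHe : ∀ e ∈ c.edges, e ∈ (delV G v₀).edgeSet := by
      intro e he
      refine mem_delV_edgeSet (c.edges_subset_edgeSet he) ?_
      intro hv₀e
      revert he
      induction e with
      | _ p q =>
        intro he
        rcases Sym2.mem_iff.mp hv₀e with h | h
        · subst h; exact hv₀sup (c.fst_mem_support_of_mem_edges he)
        · subst h; exact hv₀sup (c.snd_mem_support_of_mem_edges he)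
    have h3 := hφ.2 x (c.transfer (delV G v₀) hHe) (hc.transfer hHe)
    rw [Walk.edges_transfer] at h3
    have hmapeq : c.edges.map ψ = c.edges.map φ :=
      List.map_congr_left (fun e he => hHold e (hHe e he))
    rw [hmapeq] at hcard
    omega
  case pos =>
    have hd := hc.rotate hv₀sup
    set d := c.rotate v₀ hv₀sup with hddef
    have hdcard : (d.edges.map ψ).toFinset.card < 3 := by
      have hperm : List.Perm d.edges c.edges := (c.rotate_edges v₀ hv₀sup).perm
      rw [List.toFinset_eq_of_perm _ _ (hperm.map ψ)]
      exact hcard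
    obtain ⟨y, h₁, p, hdeq⟩ := Walk.not_nil_iff.mp (fun h => hd.ne_nil h.eq_nil)
    have hr := cycle_reverse hd
    obtain ⟨z, h₁', p', hreq⟩ := Walk.not_nil_iff.mp (fun h => hr.ne_nil h.eq_nil)
    have hdE : d.edges = s(v₀, y) :: p.edges := by rw [hdeq, Walk.edges_cons]
    have hrE : d.edges.reverse = s(v₀, z) :: p'.edges := by
      rw [← Walk.edges_reverse, hreq, Walk.edges_cons]
    have hymem : s(v₀, y) ∈ d.edges := by rw [hdE]; exact List.mem_cons_self
    have hzmem : s(v₀, z) ∈ d.edges := by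
      rw [← List.mem_reverse, hrE]; exact List.mem_cons_self
    have hycase : y = v ∨ y = w := by
      rcases edge_at_v0 hN (by exact h₁ : s(v₀, y) ∈ G.edgeSet) (by simp) with h | h
      · exact Or.inl (Sym2.congr_right.mp h)
      · exact Or.inr (Sym2.congr_right.mp h)
    have hzcase : z = v ∨ z = w := by
      rcases edge_at_v0 hN (by exact h₁' : s(v₀, z) ∈ G.edgeSet) (by simp) with h | h
      · exact Or.inl (Sym2.congr_right.mp h)
      · exact Or.inr (Sym2.congr_right.mp h)
    have hyz : y ≠ z := by
      intro h
      subst h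
      have hdE2 : d.edges = p'.edges.reverse ++ [s(v₀, y)] := by
        have := congrArg List.reverse hrE
        rwa [List.reverse_reverse, List.reverse_cons] at this
      have hnodup := hd.edges_nodup
      rw [hdE] at hnodup
      have hnotmem : s(v₀, y) ∉ p.edges := (List.nodup_cons.mp hnodup).1
      rcases hA : p'.edges.reverse with _ | ⟨a₀, A'⟩
      · rw [hA, List.nil_append] at hdE2
        have : d.edges.length = 1 := by rw [hdE2]; rfl
        have h3 := hd.three_le_length
        rw [← Walk.length_edges] at h3
        omega
      · rw [hA, List.cons_append] at hdE2
        rw [hdE] at hdE2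
        obtain ⟨h5, h6⟩ := List.cons_eq_cons.mp hdE2
        exact hnotmem (by rw [h6]; exact List.mem_append_right _ (by simp))
    -- the two new edges give colors a b on the cycle
    have hbothmem : s(v₀, v) ∈ d.edges ∧ s(v₀, w) ∈ d.edges := by
      rcases hycase with hy | hy <;> rcases hzcase with hz | hz
      · exact absurd (hy.trans hz.symm) hyz
      · exact ⟨hy ▸ hymem, hz ▸ hzmem⟩
      · exact ⟨hz ▸ hzmem, hy ▸ hymem⟩
      · exact absurd (hy.trans hz.symm) hyz
    have hTeq : ({a, b} : Finset ℕ) = (d.edges.map ψ).toFinset := by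
      have hsub : ({a, b} : Finset ℕ) ⊆ (d.edges.map ψ).toFinset := by
        intro n hn
        rcases Finset.mem_insert.mp hn with h | h
        · rw [h, List.mem_toFinset]
          exact List.mem_map.mpr ⟨s(v₀, w), hbothmem.2, hψw⟩
        · rw [Finset.mem_singleton] at h
          rw [h, List.mem_toFinset]
          exact List.mem_map.mpr ⟨s(v₀, v), hbothmem.1, hψv⟩
      have hcardle : (d.edges.map ψ).toFinset.card ≤ ({a, b} : Finset ℕ).card := by
        rw [Finset.card_insert_of_notMem (by simp [hab]), Finset.card_singleton]
        omega
      exact Finset.eq_of_subset_of_card_le hsub hcardle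
    have hcolall : ∀ e ∈ d.edges, ψ e = a ∨ ψ e = b := by
      intro e he
      have : ψ e ∈ (d.edges.map ψ).toFinset :=
        List.mem_toFinset.mpr (List.mem_map_of_mem (f := ψ) he)
      rw [← hTeq] at this
      simpa using this
    rcases hycase with hy | hy
    · subst hy
      have hd' : (Walk.cons h₁ p).IsCycle := hdeq ▸ hd
      exact cycle_analysis hN hφ.1 hHold haw hbv h₁ p hd'
        (fun e he => hcolall e (by rw [hdeq, Walk.edges_cons]; exact (by rwa [Walk.edges_cons] at he)))
    · have hz : z = v := by
        rcases hzcase with h | h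
        · exact h
        · exact absurd (hy.trans h.symm) hyz
      subst hz
      have hr' : (Walk.cons h₁' p').IsCycle := hreq ▸ hr
      refine cycle_analysis hN hφ.1 hHold haw hbv h₁' p' hr' ?_
      intro e he
      apply hcolall
      rw [← hreq, Walk.edges_reverse, List.mem_reverse] at he
      exact he

end AuxiliaryLemmas

/-- If `G` is `κ`-deletion-minimal, `v` is adjacent to a degree-2 vertex `v₀` with
`N_G(v₀) = {w, v}`, `κ ≥ deg_G(v) + 1`, and `wv ∈ E(G)`, then `v` is adjacent to at least
`κ - deg_G(w) + 2` vertices of degree at least `κ - deg_G(v) + 2`, and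
`deg_G(v) ≥ κ - deg_G(w) + 3`. -/
theorem deletionMinimal_neighbors_of_degree_two_triangle {V : Type u₁} [Fintype V]
    (G : SimpleGraph V) (κ : ℕ) (h : DeletionMinimal G κ)
    (v v₀ w : V) (hadj : G.Adj v v₀) (hdeg : vdeg G v₀ = 2)
    (hN : G.neighborSet v₀ = {w, v})
    (hκ : vdeg G v + 1 ≤ κ) (hwv : G.Adj w v) :
    (κ : ℤ) - vdeg G w + 2 ≤
        (({x : V | G.Adj v x ∧ (κ : ℤ) - vdeg G v + 2 ≤ (vdeg G x : ℤ)}).ncard : ℤ) ∧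
      (κ : ℤ) - vdeg G w + 3 ≤ (vdeg G v : ℤ) := by
  classical
  obtain ⟨hmax, hGκ, hmin⟩ := h
  have hv₀v : G.Adj v₀ v := hadj.symm
  have hwv0 : G.Adj v₀ w := by
    have : w ∈ G.neighborSet v₀ := by rw [hN]; exact Or.inl rfl
    exact this
  have hwv' : w ≠ v := by
    intro hEq
    rw [hEq, Set.pair_eq_singleton] at hN
    rw [vdeg, hN, Set.ncard_singleton] at hdeg
    omega
  have hvne : v ≠ v₀ := hadj.ne
  have hwne : w ≠ v₀ := hwv0.ne'
  have hHlt : delV G v₀ < G := lt_of_le_of_ne (delV_le G v₀) (by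
    intro hEq
    have : (delV G v₀).Adj v v₀ := by rw [hEq]; exact hadj
    exact this.2.2 rfl)
  obtain ⟨φ, hφ, hφκ⟩ := get_coloring (hmin _ hHlt)
  set H := delV G v₀ with hHdef
  -- neighbor sets of H
  have hNv : H.neighborSet v = G.neighborSet v \ {v₀} := by
    ext x
    constructor
    · rintro ⟨h1, _, h3⟩
      exact ⟨h1, h3⟩
    · rintro ⟨h1, h3⟩
      exact ⟨h1, hvne, h3⟩
  have hNw : H.neighborSet w = G.neighborSet w \ {v₀} := by
    ext x
    constructor
    · rintro ⟨h1, _, h3⟩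
      exact ⟨h1, h3⟩
    · rintro ⟨h1, h3⟩
      exact ⟨h1, hwne, h3⟩
  set Cv := colorsAt H φ v with hCvdef
  set Cw := colorsAt H φ w with hCwdef
  -- colors are < κ
  have hColκ : ∀ x : V, colorsAt H φ x ⊆ Set.Iio κ := by
    rintro x n ⟨y, hy, rfl⟩
    exact hφκ _ hy
  have hIio : (Set.Iio κ).ncard = κ := by
    rw [← Finset.coe_range, Set.ncard_coe_finset, Finset.card_range]
  have hfinIio : (Set.Iio κ).Finite := Set.finite_Iio κ
  have hfinCol : ∀ x : V, (colorsAt H φ x).Finite :=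
    fun x => hfinIio.subset (hColκ x)
  -- injectivity of colors at v
  have hInjv : Set.InjOn (fun y => φ s(v, y)) (H.neighborSet v) := by
    intro y₁ hy₁ y₂ hy₂ heq
    by_contra hne
    have hene : s(v, y₁) ≠ s(v, y₂) := fun hh => hne (Sym2.congr_right.mp hh)
    exact hφ.1 _ hy₁ _ hy₂ hene ⟨v, by simp, by simp⟩ heq
  have hCv_card : Cv.ncard + 1 = vdeg G v := by
    rw [hCvdef, colorsAt, Set.ncard_image_of_injOn hInjv, hNv]
    exact Set.ncard_diff_singleton_add_one hadj
  have hCw_card : Cw.ncard + 1 ≤ vdeg G w := by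
    have h1 : Cw.ncard ≤ (H.neighborSet w).ncard := Set.ncard_image_le
    have h2 : (H.neighborSet w).ncard + 1 = vdeg G w := by
      rw [hNw]
      exact Set.ncard_diff_singleton_add_one hwv0.symm
    omega
  -- Claim A
  have hA : ∀ a ∈ Set.Iio κ \ Cw, a ∈ Cv := by
    rintro a ⟨haκ, haCw⟩
    by_contra haCv
    have hbex : ∃ b, b ∈ Set.Iio κ \ insert a Cv := by
      by_contra hne
      push_neg at hne
      have hsub : Set.Iio κ ⊆ insert a Cv := by
        intro b hb
        by_contra hbn
        exact hne b ⟨hb, hbn⟩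
      have h1 := Set.ncard_le_ncard hsub ((hfinCol v).insert a)
      rw [hIio] at h1
      have h2 := Set.ncard_insert_le a Cv
      omega
    obtain ⟨b, hbκ, hbn⟩ := hbex
    rw [Set.mem_insert_iff] at hbn
    push_neg at hbn
    obtain ⟨t, s, h1, h2, _⟩ :=
      ext_lemma hGκ hadj hN hwv' hφ hφκ haκ hbκ (Ne.symm hbn.1) haCw hbn.2
    exact haCv ⟨t, h1, h2⟩
  -- Claim B : degree bound for good neighbors
  have hB : ∀ t, H.Adj v t → φ s(v, t) ∉ Cw → (κ : ℤ) - vdeg G v + 2 ≤ (vdeg G t : ℤ) := by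
    intro t hvt hnotCw
    have haκ : φ s(v, t) < κ := hφκ _ hvt
    have haCv : φ s(v, t) ∈ Cv := ⟨t, hvt, rfl⟩
    have hsub : insert (φ s(v, t)) (Set.Iio κ \ Cv) ⊆ colorsAt H φ t := by
      intro b hb
      rcases Set.mem_insert_iff.mp hb with hb | ⟨hbκ, hbCv⟩
      · exact ⟨v, hvt.symm, by show φ s(t, v) = b; rw [Sym2.eq_swap, hb]⟩
      · have hab : φ s(v, t) ≠ b := fun hh => hbCv (hh ▸ haCv)
        obtain ⟨t', s', h1, h2, h3, h4, h5⟩ :=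
          ext_lemma hGκ hadj hN hwv' hφ hφκ haκ hbκ hab hnotCw hbCv
        have htt : t' = t := hInjv h1 hvt h2
        rw [htt] at h3 h5
        exact ⟨s', h3, h5⟩
    have hanotin : φ s(v, t) ∉ Set.Iio κ \ Cv := fun hh => hh.2 haCv
    have h1 : (Set.Iio κ \ Cv).ncard + 1 ≤ (colorsAt H φ t).ncard := by
      rw [← Set.ncard_insert_of_notMem hanotin hfinIio.diff]
      exact Set.ncard_le_ncard hsub (hfinCol t)
    have h2 : κ ≤ (Set.Iio κ \ Cv).ncard + Cv.ncard := by
      have := Set.ncard_le_ncard_diff_add_ncard (Set.Iio κ) Cv (hfinCol v)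
      omega
    have h3 : (colorsAt H φ t).ncard ≤ vdeg G t := by
      have ha : (colorsAt H φ t).ncard ≤ (H.neighborSet t).ncard := Set.ncard_image_le
      have hb' : (H.neighborSet t).ncard ≤ (G.neighborSet t).ncard :=
        Set.ncard_le_ncard (fun y hy => hy.1) (Set.toFinite _)
      exact le_trans ha hb'
    omega
  -- the β color
  have hvwH : H.Adj v w := ⟨hwv.symm, hvne, hwne⟩
  have hβCv : φ s(v, w) ∈ Cv := ⟨w, hvwH, rfl⟩
  have hβCw : φ s(v, w) ∈ Cw := ⟨v, hvwH.symm, by rw [Sym2.eq_swap]⟩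
  set AS := Set.Iio κ \ Cw with hASdef
  have hβAS : φ s(v, w) ∉ AS := fun hh => hh.2 hβCw
  have hcard2 : AS.ncard + 1 ≤ Cv.ncard := by
    rw [← Set.ncard_insert_of_notMem hβAS hfinIio.diff]
    refine Set.ncard_le_ncard ?_ (hfinCol v)
    intro b hb
    rcases Set.mem_insert_iff.mp hb with hb | hb
    · rw [hb]; exact hβCv
    · exact hA b hb
  have hk2 : κ ≤ AS.ncard + Cw.ncard := by
    have h5 := Set.ncard_le_ncard_diff_add_ncard (Set.Iio κ) Cw (hfinCol w)
    rw [← hASdef] at h5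
    omega
  constructor
  · -- first goal
    set T := {t : V | H.Adj v t ∧ φ s(v, t) ∉ Cw} with hTdef
    have hAScard : AS.ncard ≤ T.ncard := by
      have hsub : AS ⊆ (fun t => φ s(v, t)) '' T := by
        intro a ha
        obtain ⟨t, ht, hφeq⟩ := hA a ha
        have hφeq' : φ s(v, t) = a := hφeq
        exact ⟨t, ⟨ht, by rw [hφeq']; exact ha.2⟩, hφeq'⟩
      have h1 : AS.ncard ≤ ((fun t => φ s(v, t)) '' T).ncard :=
        Set.ncard_le_ncard hsub ((Set.toFinite T).image _)
      have h2 : ((fun t => φ s(v, t)) '' T).ncard ≤ T.ncard := Set.ncard_image_le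
      omega
    have hwT : w ∉ T := fun hh => hh.2 hβCw
    have hsubS : insert w T ⊆ {x : V | G.Adj v x ∧ (κ : ℤ) - vdeg G v + 2 ≤ (vdeg G x : ℤ)} := by
      intro t ht
      rcases Set.mem_insert_iff.mp ht with rfl | ⟨h1, h2⟩
      · refine ⟨hwv.symm, ?_⟩
        omega
      · exact ⟨h1.1, hB t h1 h2⟩
    have hfin : ({x : V | G.Adj v x ∧ (κ : ℤ) - vdeg G v + 2 ≤ (vdeg G x : ℤ)}).ncard ≥
        T.ncard + 1 := by
      rw [← Set.ncard_insert_of_notMem hwT]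
      exact Set.ncard_le_ncard hsubS (Set.toFinite _)
    omega
  · -- second goal
    omega
end

section
/- Let G be a κ-deletion-minimal graph, uv an edge of G, and φ an acyclic edge coloring of G − uv with colors from {1,…,κ}. If the set U(u) of colors appearing on edges incident with u is disjoint from the set U(v) of colors appearing on edges incident with v, then deg_G(u) + deg_G(v) = κ + 2. -/
open SimpleGraph

universe u₁ u₂

section Helpers

variable {V : Type u₁}

private lemma end_mem_edge {H : SimpleGraph V} :
    ∀ {x y : V} (p : H.Walk x y), ¬ p.Nil → ∃ e ∈ p.edges, y ∈ e := by
  intro x y p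
  induction p with
  | nil => intro h; simp at h
  | @cons a b c h p ih =>
    intro _
    by_cases hn : p.Nil
    · cases p with
      | nil => exact ⟨s(a, b), by simp, by simp⟩
      | cons h' p' => simp at hn
    · obtain ⟨e, he, hye⟩ := ih hn
      exact ⟨e, by simp [he], hye⟩

private lemma cycle_two_edges_at_start {H : SimpleGraph V} {x : V}
    (q : H.Walk x x) (hq : q.IsCycle) :
    ∃ e₁ ∈ q.edges, ∃ e₂ ∈ q.edges, x ∈ e₁ ∧ x ∈ e₂ ∧ e₁ ≠ e₂ := by
  cases q with
  | nil => exact absurd rfl hq.ne_nil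
  | @cons _ b _ h p =>
    have hb : b ≠ x := fun hbx => by subst hbx; exact H.irrefl h
    have hnn : ¬ p.Nil := SimpleGraph.Walk.not_nil_of_ne hb
    obtain ⟨e, he, hxe⟩ := end_mem_edge p hnn
    have hcyc := (SimpleGraph.Walk.cons_isCycle_iff p h).mp hq
    exact ⟨s(x, b), by simp, e, by simp [he], by simp, hxe,
      fun heq => hcyc.2 (heq ▸ he)⟩

/-- In a cycle, every vertex lying on some edge of the cycle lies on two distinct
edges of the cycle. -/
private lemma cycle_two_edges_at [DecidableEq V] {H : SimpleGraph V} {x y : V}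
    (w : H.Walk y y) (hw : w.IsCycle) (hx : x ∈ w.support) :
    ∃ e₁ ∈ w.edges, ∃ e₂ ∈ w.edges, x ∈ e₁ ∧ x ∈ e₂ ∧ e₁ ≠ e₂ := by
  obtain ⟨e₁, he₁, e₂, he₂, hx₁, hx₂, hne⟩ :=
    cycle_two_edges_at_start (w.rotate x hx) (hw.rotate hx)
  exact ⟨e₁, (SimpleGraph.Walk.rotate_edges w x hx).mem_iff.mp he₁,
    e₂, (SimpleGraph.Walk.rotate_edges w x hx).mem_iff.mp he₂, hx₁, hx₂, hne⟩

private lemma mem_del_edgeSet {G : SimpleGraph V} {u v w x : V} (huv : G.Adj u v)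
    (hadj : G.Adj w x) (hne : s(w, x) ≠ s(u, v)) :
    s(w, x) ∈ (G.deleteEdges {s(u, v)}).edgeSet := by
  rw [SimpleGraph.edgeSet_deleteEdges]
  exact ⟨hadj, by simpa using hne⟩

private lemma Uset_eq (G : SimpleGraph V) (u v : V) (huv : G.Adj u v)
    (φ : Sym2 V → ℕ) :
    {c : ℕ | ∃ e ∈ (G.deleteEdges {s(u, v)}).edgeSet, u ∈ e ∧ φ e = c} =
      (fun w => φ s(u, w)) '' (G.neighborSet u \ {v}) := by
  ext c
  constructor
  · rintro ⟨e, he, hue, rfl⟩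
    rw [SimpleGraph.edgeSet_deleteEdges] at he
    obtain ⟨w, rfl⟩ := Sym2.mem_iff_exists.mp hue
    refine ⟨w, ⟨(SimpleGraph.mem_edgeSet G).mp he.1, ?_⟩, rfl⟩
    intro hwv
    simp only [Set.mem_singleton_iff] at hwv
    exact he.2 (by rw [hwv]; exact rfl)
  · rintro ⟨w, ⟨hw, hwv⟩, rfl⟩
    simp only [Set.mem_singleton_iff] at hwv
    exact ⟨s(u, w), mem_del_edgeSet huv hw (fun h => hwv (Sym2.congr_right.mp h)),
      by simp, rfl⟩

private lemma Ucard [Fintype V] (G : SimpleGraph V) (u v : V) (huv : G.Adj u v)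
    (φ : Sym2 V → ℕ)
    (hp : IsProperEdgeColoring (G.deleteEdges {s(u, v)}) φ) :
    {c : ℕ | ∃ e ∈ (G.deleteEdges {s(u, v)}).edgeSet, u ∈ e ∧ φ e = c}.ncard + 1
      = vdeg G u := by
  rw [Uset_eq G u v huv φ, Set.ncard_image_of_injOn ?inj, vdeg]
  · exact Set.ncard_diff_singleton_add_one (show v ∈ G.neighborSet u from huv)
      (Set.toFinite _)
  case inj =>
    intro w₁ hw₁ w₂ hw₂ heq
    by_contra hne
    have hne' : s(u, w₁) ≠ s(u, w₂) := fun h => hne (Sym2.congr_right.mp h)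
    have hv₁ : w₁ ≠ v := by simpa using hw₁.2
    have hv₂ : w₂ ≠ v := by simpa using hw₂.2
    exact hp _ (mem_del_edgeSet huv hw₁.1 (fun h => hv₁ (Sym2.congr_right.mp h)))
      _ (mem_del_edgeSet huv hw₂.1 (fun h => hv₂ (Sym2.congr_right.mp h)))
      hne' ⟨u, by simp, by simp⟩ heq

end Helpers

/-- **Fact 2 (second part).** Let `G` be `κ`-deletion-minimal, `uv ∈ E(G)`, and `φ` an
acyclic edge coloring of `G - uv` with colors from `{0, …, κ-1}`. If the set of colors
at `u` is disjoint from the set of colors at `v`, then `deg_G(u) + deg_G(v) = κ + 2`. -/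
theorem deletionMinimal_disjoint_colors_degree_sum {V : Type u₁} [Fintype V]
    (G : SimpleGraph V) (κ : ℕ) (h : DeletionMinimal G κ)
    (u v : V) (huv : G.Adj u v) (φ : Sym2 V → ℕ)
    (hφ : IsAcyclicEdgeColoring (G.deleteEdges {s(u, v)}) φ)
    (hcol : ∀ e ∈ (G.deleteEdges {s(u, v)}).edgeSet, φ e < κ)
    (hdisj : Disjoint
      {c : ℕ | ∃ e ∈ (G.deleteEdges {s(u, v)}).edgeSet, u ∈ e ∧ φ e = c}
      {c : ℕ | ∃ e ∈ (G.deleteEdges {s(u, v)}).edgeSet, v ∈ e ∧ φ e = c}) :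
    vdeg G u + vdeg G v = κ + 2 := by
  classical
  have hprop := hφ.1
  have hswap : s(v, u) = s(u, v) := Sym2.eq_swap
  have hcardU : {c : ℕ | ∃ e ∈ (G.deleteEdges {s(u, v)}).edgeSet, u ∈ e ∧ φ e = c}.ncard + 1
      = vdeg G u := Ucard G u v huv φ hprop
  have hcardV : {c : ℕ | ∃ e ∈ (G.deleteEdges {s(u, v)}).edgeSet, v ∈ e ∧ φ e = c}.ncard + 1
      = vdeg G v := by
    have := Ucard G v u huv.symm φ (by rw [hswap]; exact hprop)
    rwa [hswap] at this
  set Uu : Set ℕ := {c : ℕ | ∃ e ∈ (G.deleteEdges {s(u, v)}).edgeSet, u ∈ e ∧ φ e = c}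
    with hUud
  set Uv : Set ℕ := {c : ℕ | ∃ e ∈ (G.deleteEdges {s(u, v)}).edgeSet, v ∈ e ∧ φ e = c}
    with hUvd
  have hUuIio : Uu ⊆ Set.Iio κ := by rintro c ⟨e, he, -, rfl⟩; exact hcol e he
  have hUvIio : Uv ⊆ Set.Iio κ := by rintro c ⟨e, he, -, rfl⟩; exact hcol e he
  have hfinU : Uu.Finite := (Set.finite_Iio κ).subset hUuIio
  have hfinV : Uv.Finite := (Set.finite_Iio κ).subset hUvIio
  have hIio : (Set.Iio κ).ncard = κ := by
    rw [← Finset.coe_range, Set.ncard_coe_finset, Finset.card_range]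
  have hunion : (Uu ∪ Uv).ncard = Uu.ncard + Uv.ncard :=
    Set.ncard_union_eq hdisj hfinU hfinV
  have upper : Uu.ncard + Uv.ncard ≤ κ := by
    rw [← hunion, ← hIio]
    exact Set.ncard_le_ncard (Set.union_subset hUuIio hUvIio) (Set.finite_Iio κ)
  have hmemH : ∀ e ∈ G.edgeSet, e ≠ s(u, v) → e ∈ (G.deleteEdges {s(u, v)}).edgeSet := by
    intro e he hne
    rw [SimpleGraph.edgeSet_deleteEdges]
    exact ⟨he, by simpa using hne⟩
  have hlow : κ ≤ Uu.ncard + Uv.ncard := by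
    by_contra hlt
    push_neg at hlt
    obtain ⟨c₀, hc₀κ, hc₀⟩ : ∃ c₀ < κ, c₀ ∉ Uu ∪ Uv := by
      by_contra hno
      push_neg at hno
      have hsub : Set.Iio κ ⊆ Uu ∪ Uv := fun c hc => hno c hc
      have hle := Set.ncard_le_ncard hsub (hfinU.union hfinV)
      rw [hIio, hunion] at hle
      omega
    set ψ : Sym2 V → ℕ := fun e => if e = s(u, v) then c₀ else φ e with hψd
    have hψuv : ψ s(u, v) = c₀ := if_pos rfl
    have hψagree : ∀ e ∈ (G.deleteEdges {s(u, v)}).edgeSet, ψ e = φ e := by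
      intro e he
      rw [SimpleGraph.edgeSet_deleteEdges] at he
      exact if_neg (by simpa using he.2)
    have hproper : IsProperEdgeColoring G ψ := by
      intro e₁ h₁ e₂ h₂ hne hsh
      by_cases He₁ : e₁ = s(u, v) <;> by_cases He₂ : e₂ = s(u, v)
      · exact absurd (He₁.trans He₂.symm) hne
      · subst He₁
        obtain ⟨x, hx1, hx2⟩ := hsh
        have h₂' := hmemH e₂ h₂ He₂
        rw [hψuv, hψagree e₂ h₂']
        rcases Sym2.mem_iff.mp hx1 with rfl | rfl
        · exact fun hc => hc₀ (Or.inl ⟨e₂, h₂', hx2, hc.symm⟩)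
        · exact fun hc => hc₀ (Or.inr ⟨e₂, h₂', hx2, hc.symm⟩)
      · subst He₂
        obtain ⟨x, hx1, hx2⟩ := hsh
        have h₁' := hmemH e₁ h₁ He₁
        rw [hψuv, hψagree e₁ h₁']
        rcases Sym2.mem_iff.mp hx2 with rfl | rfl
        · exact fun hc => hc₀ (Or.inl ⟨e₁, h₁', hx1, hc⟩)
        · exact fun hc => hc₀ (Or.inr ⟨e₁, h₁', hx1, hc⟩)
      · have h₁' := hmemH e₁ h₁ He₁
        have h₂' := hmemH e₂ h₂ He₂
        rw [hψagree e₁ h₁', hψagree e₂ h₂']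
        exact hprop e₁ h₁' e₂ h₂' hne hsh
    have hacyc : IsAcyclicEdgeColoring G ψ := by
      refine ⟨hproper, ?_⟩
      intro x c hc
      by_cases hmem : s(u, v) ∈ c.edges
      · have hu : u ∈ c.support := c.fst_mem_support_of_mem_edges hmem
        have hv : v ∈ c.support := c.snd_mem_support_of_mem_edges hmem
        obtain ⟨eu, heu, huu, hneu⟩ : ∃ e ∈ c.edges, u ∈ e ∧ e ≠ s(u, v) := by
          obtain ⟨e₁, he₁, e₂, he₂, hu₁, hu₂, hne12⟩ := cycle_two_edges_at c hc hu
          by_cases h1 : e₁ = s(u, v)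
          · exact ⟨e₂, he₂, hu₂, fun h => hne12 (h1.trans h.symm)⟩
          · exact ⟨e₁, he₁, hu₁, h1⟩
        obtain ⟨ev, hev, hvv, hnev⟩ : ∃ e ∈ c.edges, v ∈ e ∧ e ≠ s(u, v) := by
          obtain ⟨f₁, hf₁, f₂, hf₂, hv₁, hv₂, hnf⟩ := cycle_two_edges_at c hc hv
          by_cases h1 : f₁ = s(u, v)
          · exact ⟨f₂, hf₂, hv₂, fun h => hnf (h1.trans h.symm)⟩
          · exact ⟨f₁, hf₁, hv₁, h1⟩
        have heuH : eu ∈ (G.deleteEdges {s(u, v)}).edgeSet :=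
          hmemH eu (c.edges_subset_edgeSet heu) hneu
        have hevH : ev ∈ (G.deleteEdges {s(u, v)}).edgeSet :=
          hmemH ev (c.edges_subset_edgeSet hev) hnev
        have ha : φ eu ∈ Uu := ⟨eu, heuH, huu, rfl⟩
        have hb : φ ev ∈ Uv := ⟨ev, hevH, hvv, rfl⟩
        have d1 : c₀ ≠ φ eu := fun h => hc₀ (Or.inl (h ▸ ha))
        have d2 : c₀ ≠ φ ev := fun h => hc₀ (Or.inr (h ▸ hb))
        have d3 : φ eu ≠ φ ev := fun h => (Set.disjoint_left.mp hdisj ha) (h ▸ hb)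
        have hsub : ({c₀, φ eu, φ ev} : Finset ℕ) ⊆ (c.edges.map ψ).toFinset := by
          intro z hz
          simp only [Finset.mem_insert, Finset.mem_singleton] at hz
          simp only [List.mem_toFinset, List.mem_map]
          rcases hz with rfl | rfl | rfl
          · exact ⟨s(u, v), hmem, hψuv⟩
          · exact ⟨eu, heu, hψagree eu heuH⟩
          · exact ⟨ev, hev, hψagree ev hevH⟩
        calc 3 = ({c₀, φ eu, φ ev} : Finset ℕ).card := by
              rw [Finset.card_insert_of_notMem (by simp [d1, d2]),
                Finset.card_insert_of_notMem (by simp [d3]), Finset.card_singleton]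
          _ ≤ _ := Finset.card_le_card hsub
      · have hall : ∀ e ∈ c.edges, e ∈ (G.deleteEdges {s(u, v)}).edgeSet :=
          fun e he => hmemH e (c.edges_subset_edgeSet he) (fun h => hmem (h ▸ he))
        have h3 := hφ.2 x (c.transfer _ hall) (hc.transfer hall)
        rw [SimpleGraph.Walk.edges_transfer] at h3
        have hmapeq : c.edges.map ψ = c.edges.map φ :=
          List.map_congr_left (fun e he => hψagree e (hall e he))
        rw [hmapeq]
        exact h3
    have hκmem : κ ∈ {n : ℕ | ∃ ψ' : Sym2 V → ℕ,
        IsAcyclicEdgeColoring G ψ' ∧ ∀ e ∈ G.edgeSet, ψ' e < n} := by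
      refine ⟨ψ, hacyc, fun e he => ?_⟩
      by_cases hne : e = s(u, v)
      · rw [hne, hψuv]; exact hc₀κ
      · rw [hψagree e (hmemH e he hne)]; exact hcol e (hmemH e he hne)
    have hle : acyclicChromaticIndex G ≤ κ := Nat.sInf_le hκmem
    exact absurd hle (Nat.not_le.mpr h.2.1)
  omega
end
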